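/- arXiv:1601.05305 — 3 statements merged into one kernel-verified Lean document; each statement's English description precedes it below -/
import Mathlib

section
/- For every n ≥ 5, there exists an n-vertex 4-chordal graph that has no clique transversal with fewer than ⌊2(n-1)/7⌋ vertices. -/
open SimpleGraph

/-- A graph is *chordal* if it contains no induced cycle of length four or more. -/
def Chordal {V : Type*} (G : SimpleGraph V) : Prop :=
  ∀ n : ℕ, 4 ≤ n → IsEmpty (cycleGraph n ↪g G)

/-- A set of vertices is a *maximal clique* if it is a clique and is
inclusion-wise maximal among cliques. -/
def IsMaximalClique {V : Type*} (G : SimpleGraph V) (s : Set V) : Prop :=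
  G.IsClique s ∧ ∀ t : Set V, G.IsClique t → s ⊆ t → s = t

/-- A chordal graph is *k-chordal* if each of its edges is contained in a clique
on `k` vertices. -/
def KChordal {V : Type*} (k : ℕ) (G : SimpleGraph V) : Prop :=
  Chordal G ∧ ∀ v w : V, G.Adj v w →
    ∃ s : Set V, G.IsClique s ∧ s.ncard = k ∧ v ∈ s ∧ w ∈ s

/-- A *clique transversal* of `G` is a set of vertices meeting every non-trivial
(i.e. with at least two vertices) maximal clique of `G`. -/
def CliqueTransversal {V : Type*} (G : SimpleGraph V) (U : Set V) : Prop :=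
  ∀ s : Set V, IsMaximalClique G s → s.Nontrivial → (s ∩ U).Nonempty

namespace FC
set_option maxHeartbeats 2000000

def Mof (n : ℕ) : ℕ := (n - 8) / 7
def Lof (n : ℕ) : ℕ := if Mof n = 0 then 0 else 7 * Mof n + 8
def Jof (n : ℕ) : ℕ := if Mof n = 0 then 2 * (n - 1) / 7 else 2 * (n - Lof n) / 7
def Kof (n : ℕ) : ℕ := if Mof n = 0 then Jof n else 2 * Mof n + 2 + Jof n

lemma arith_facts (n : ℕ) : Mof n = (n - 8) / 7 ∧
    ((Mof n = 0 ∧ Lof n = 0 ∧ Jof n = 2 * (n - 1) / 7 ∧ Kof n = Jof n) ∨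
     (1 ≤ Mof n ∧ Lof n = 7 * Mof n + 8 ∧ Jof n = 2 * (n - Lof n) / 7 ∧
       Kof n = 2 * Mof n + 2 + Jof n)) := by
  refine ⟨rfl, ?_⟩
  rcases Nat.eq_zero_or_pos (Mof n) with h | h
  · exact Or.inl ⟨h, by simp [Lof, Jof, Kof, h]⟩
  · exact Or.inr ⟨h, by simp [Lof, Jof, Kof, Nat.pos_iff_ne_zero.mp h]⟩

abbrev Quad := ℕ × ℕ × ℕ × ℕ

def qmem (x : ℕ) (q : Quad) : Prop := x = q.1 ∨ x = q.2.1 ∨ x = q.2.2.1 ∨ x = q.2.2.2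

def IsFamQ (n : ℕ) (q : Quad) : Prop :=
  (1 ≤ Mof n ∧
    (q = (0, 1, 2, 3) ∨ q = (2, 3, 8, 9) ∨
     q = (7 * Mof n + 4, 7 * Mof n + 5, 7 * Mof n + 6, 7 * Mof n + 7) ∨
     q = (7 * Mof n + 2, 7 * Mof n + 3, 7 * Mof n + 4, 7 * Mof n + 5) ∨
     (∃ u, u < Mof n ∧
       (q = (4 + 7 * u, 5 + 7 * u, 6 + 7 * u, 7 + 7 * u) ∨
        q = (6 + 7 * u, 7 + 7 * u, 8 + 7 * u, 10 + 7 * u) ∨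
        (u + 1 < Mof n ∧ q = (9 + 7 * u, 10 + 7 * u, 15 + 7 * u, 16 + 7 * u)))))) ∨
  (∃ t, t < Jof n ∧ q = (Lof n + 4 * t, Lof n + 4 * t + 1, Lof n + 4 * t + 2, Lof n + 4 * t + 3))

def Gr (n : ℕ) : SimpleGraph (Fin n) where
  Adj v w := v ≠ w ∧ ∃ q, IsFamQ n q ∧ qmem v.val q ∧ qmem w.val q
  symm := by constructor; rintro v w ⟨h, q, hq, hv, hw⟩; exact ⟨h.symm, q, hq, hw, hv⟩
  loopless := by constructor; rintro v ⟨h, -⟩; exact h rfl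

lemma gr_adj {n : ℕ} {v w : Fin n} :
    (Gr n).Adj v w ↔ v ≠ w ∧ ∃ q, IsFamQ n q ∧ qmem v.val q ∧ qmem w.val q := Iff.rfl

set_option maxHeartbeats 1000000 in
lemma quad_sound {n : ℕ} {q : Quad} (h : IsFamQ n q) :
    q.1 < q.2.1 ∧ q.2.1 < q.2.2.1 ∧ q.2.2.1 < q.2.2.2 ∧ q.2.2.2 < n := by
  have af := arith_facts n
  rcases h with ⟨hM, hq | hq | hq | hq | ⟨u, hu, hq | hq | ⟨hu2, hq⟩⟩⟩ | ⟨t, ht, hq⟩ <;>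
    subst hq <;> simp only [] <;> omega

def nq (n v : ℕ) : Quad :=
  if Lof n ≤ v then
    (Lof n + 4 * ((v - Lof n) / 4), Lof n + 4 * ((v - Lof n) / 4) + 1,
     Lof n + 4 * ((v - Lof n) / 4) + 2, Lof n + 4 * ((v - Lof n) / 4) + 3)
  else if v < 2 then (0, 1, 2, 3)
  else if v < 4 then (2, 3, 8, 9)
  else if v < 7 * Mof n + 4 then
    (if (v - 4) % 7 ≤ 1 then
      (4 + 7 * ((v - 4) / 7), 5 + 7 * ((v - 4) / 7), 6 + 7 * ((v - 4) / 7), 7 + 7 * ((v - 4) / 7))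
     else if (v - 4) % 7 ≤ 3 then
      (6 + 7 * ((v - 4) / 7), 7 + 7 * ((v - 4) / 7), 8 + 7 * ((v - 4) / 7), 10 + 7 * ((v - 4) / 7))
     else if (v - 4) / 7 + 1 < Mof n then
      (9 + 7 * ((v - 4) / 7), 10 + 7 * ((v - 4) / 7), 15 + 7 * ((v - 4) / 7), 16 + 7 * ((v - 4) / 7))
     else (7 * Mof n + 2, 7 * Mof n + 3, 7 * Mof n + 4, 7 * Mof n + 5))
  else (7 * Mof n + 4, 7 * Mof n + 5, 7 * Mof n + 6, 7 * Mof n + 7)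

set_option maxHeartbeats 2000000 in
lemma nq_mem {n v x : ℕ} {q : Quad} (hq : IsFamQ n q) (hv : qmem v q) (hx : qmem x q)
    (hlt : v < x) : qmem x (nq n v) := by
  have af := arith_facts n
  rcases hq with ⟨hM, hq | hq | hq | hq | ⟨u, hu, hq | hq | ⟨hu2, hq⟩⟩⟩ | ⟨t, ht, hq⟩ <;>
    subst hq <;> simp only [qmem] at hv hx ⊢ <;> unfold nq <;>
    split_ifs <;> simp only [] <;> omega

set_option maxHeartbeats 2000000 in
lemma nq_fam {n v x : ℕ} {q : Quad} (hq : IsFamQ n q) (hv : qmem v q) (hx : qmem x q)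
    (hlt : v < x) : IsFamQ n (nq n v) := by
  have af := arith_facts n
  rcases hq with ⟨hM, hq | hq | hq | hq | ⟨u, hu, hq | hq | ⟨hu2, hq⟩⟩⟩ | ⟨t, ht, hq⟩ <;>
    subst hq <;> simp only [qmem] at hv hx <;> unfold nq <;> unfold IsFamQ <;>
    split_ifs <;>
    first
      | exact Or.inr ⟨(v - Lof n) / 4, by omega, rfl⟩
      | exact Or.inl ⟨by omega, Or.inl rfl⟩
      | exact Or.inl ⟨by omega, Or.inr (Or.inl rfl)⟩
      | exact Or.inl ⟨by omega, Or.inr (Or.inr (Or.inl rfl))⟩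
      | exact Or.inl ⟨by omega, Or.inr (Or.inr (Or.inr (Or.inl rfl)))⟩
      | exact Or.inl ⟨by omega, Or.inr (Or.inr (Or.inr (Or.inr
          ⟨(v - 4) / 7, by omega, Or.inl rfl⟩)))⟩
      | exact Or.inl ⟨by omega, Or.inr (Or.inr (Or.inr (Or.inr
          ⟨(v - 4) / 7, by omega, Or.inr (Or.inl rfl)⟩)))⟩
      | exact Or.inl ⟨by omega, Or.inr (Or.inr (Or.inr (Or.inr
          ⟨(v - 4) / 7, by omega, Or.inr (Or.inr ⟨by omega, rfl⟩)⟩)))⟩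

lemma gr_chordal (n : ℕ) : Chordal (Gr n) := by
  intro k hk
  obtain ⟨k, rfl⟩ : ∃ k', k = k' + 4 := ⟨k - 4, by omega⟩
  constructor
  intro e
  have hne : (Finset.univ : Finset (Fin (k + 4))).Nonempty := ⟨0, Finset.mem_univ 0⟩
  obtain ⟨i, -, hmin⟩ := Finset.exists_min_image Finset.univ (fun j => (e j).val) hne
  have key : ∀ x : ℕ, x % (k + 4) < k + 4 ∧
      (x % (k + 4) = x ∨ x % (k + 4) + (k + 4) = x ∨ 2 * (k + 4) ≤ x) := by
    intro x
    refine ⟨Nat.mod_lt _ (by omega), ?_⟩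
    rcases Nat.lt_or_ge x (k + 4) with h | h
    · exact Or.inl (Nat.mod_eq_of_lt h)
    · rcases Nat.lt_or_ge x (2 * (k + 4)) with h2 | h2
      · refine Or.inr (Or.inl ?_)
        rw [Nat.mod_eq_sub_mod h, Nat.mod_eq_of_lt (by omega)]
        omega
      · exact Or.inr (Or.inr h2)
  have hsub : ∀ a b : Fin (k + 4), (a - b).val = (k + 4 - b.val + a.val) % (k + 4) := by
    intro a b; rw [Fin.sub_def]
  have hadd : ∀ a b : Fin (k + 4), (a + b).val = (a.val + b.val) % (k + 4) := by
    intro a b; rw [Fin.add_def]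
  have hone : (1 : Fin (k + 4)).val = 1 := rfl
  have hik : i.val < k + 4 := i.isLt
  have hA : (i + 1 : Fin (k + 4)).val = (i.val + 1) % (k + 4) := by rw [hadd, hone]
  have hB : (i - 1 : Fin (k + 4)).val = (k + 4 - 1 + i.val) % (k + 4) := by rw [hsub, hone]
  have kA := key (i.val + 1)
  have kB := key (k + 4 - 1 + i.val)
  have hc1 : (cycleGraph (k + 4)).Adj i (i + 1) := by
    rw [cycleGraph_adj']
    right
    rw [hsub, hA]
    have k2 := key (k + 4 - i.val + (i.val + 1) % (k + 4))
    omega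
  have hc2 : (cycleGraph (k + 4)).Adj i (i - 1) := by
    rw [cycleGraph_adj']
    left
    rw [hsub, hB]
    have k2 := key (k + 4 - (k + 4 - 1 + i.val) % (k + 4) + i.val)
    omega
  have h1 : (Gr n).Adj (e i) (e (i + 1)) := e.map_rel_iff.mpr hc1
  have h2 : (Gr n).Adj (e i) (e (i - 1)) := e.map_rel_iff.mpr hc2
  have hne1 : i ≠ i + 1 := by
    intro h; have := congrArg Fin.val h; rw [hA] at this; omega
  have hne2 : i ≠ i - 1 := by
    intro h; have := congrArg Fin.val h; rw [hB] at this; omega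
  have hne3 : i + 1 ≠ i - 1 := by
    intro h; have := congrArg Fin.val h; rw [hA, hB] at this; omega
  have hlt1 : (e i).val < (e (i + 1)).val := by
    have h := hmin (i + 1) (Finset.mem_univ _)
    have h' : (e i) ≠ (e (i + 1)) := fun hh => hne1 (e.injective hh)
    have h'' : (e i).val ≠ (e (i + 1)).val := fun hh => h' (Fin.ext hh)
    omega
  have hlt2 : (e i).val < (e (i - 1)).val := by
    have h := hmin (i - 1) (Finset.mem_univ _)
    have h' : (e i) ≠ (e (i - 1)) := fun hh => hne2 (e.injective hh)
    have h'' : (e i).val ≠ (e (i - 1)).val := fun hh => h' (Fin.ext hh)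
    omega
  obtain ⟨-, q1, hq1, hv1, hu1⟩ := h1
  obtain ⟨-, q2, hq2, hv2, hw2⟩ := h2
  have hadj : (Gr n).Adj (e (i + 1)) (e (i - 1)) :=
    ⟨fun hh => hne3 (e.injective hh), nq n (e i).val, nq_fam hq1 hv1 hu1 hlt1,
      nq_mem hq1 hv1 hu1 hlt1, nq_mem hq2 hv2 hw2 hlt2⟩
  have hcyc : (cycleGraph (k + 4)).Adj (i + 1) (i - 1) := e.map_rel_iff.mp hadj
  rw [cycleGraph_adj'] at hcyc
  simp only [hsub, hone, hA, hB] at hcyc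
  have k3 := key (k + 4 - (k + 4 - 1 + i.val) % (k + 4) + (i.val + 1) % (k + 4))
  have k4 := key (k + 4 - (i.val + 1) % (k + 4) + (k + 4 - 1 + i.val) % (k + 4))
  omega

lemma ncard4 {n : ℕ} (a b c d : Fin n) (hab : a ≠ b) (hac : a ≠ c) (had : a ≠ d)
    (hbc : b ≠ c) (hbd : b ≠ d) (hcd : c ≠ d) :
    ({a, b, c, d} : Set (Fin n)).ncard = 4 := by
  rw [Set.ncard_insert_of_notMem (by simp [hab, hac, had]),
    Set.ncard_insert_of_notMem (by simp [hbc, hbd]),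
    Set.ncard_insert_of_notMem (by simp [hcd]), Set.ncard_singleton]

lemma gr_edge_k4 (n : ℕ) : ∀ v w : Fin n, (Gr n).Adj v w →
    ∃ s : Set (Fin n), (Gr n).IsClique s ∧ s.ncard = 4 ∧ v ∈ s ∧ w ∈ s := by
  intro v w hvw
  obtain ⟨hne, q, hq, hv, hw⟩ := hvw
  obtain ⟨h12, h23, h34, h4n⟩ := quad_sound hq
  set a : Fin n := ⟨q.1, by omega⟩ with ha
  set b : Fin n := ⟨q.2.1, by omega⟩ with hb
  set c : Fin n := ⟨q.2.2.1, by omega⟩ with hc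
  set d : Fin n := ⟨q.2.2.2, by omega⟩ with hd
  have hva : a.val = q.1 := by rw [ha]
  have hvb : b.val = q.2.1 := by rw [hb]
  have hvc : c.val = q.2.2.1 := by rw [hc]
  have hvd : d.val = q.2.2.2 := by rw [hd]
  have hmq : ∀ x : Fin n, x ∈ ({a, b, c, d} : Set (Fin n)) → qmem x.val q := by
    rintro x (rfl | rfl | rfl | rfl)
    · exact Or.inl rfl
    · exact Or.inr (Or.inl rfl)
    · exact Or.inr (Or.inr (Or.inl rfl))
    · exact Or.inr (Or.inr (Or.inr rfl))
  refine ⟨{a, b, c, d}, ?_, ?_, ?_, ?_⟩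
  · intro x hx y hy hxy
    exact ⟨hxy, q, hq, hmq x hx, hmq y hy⟩
  · exact ncard4 a b c d (Fin.ne_of_val_ne (by omega)) (Fin.ne_of_val_ne (by omega))
      (Fin.ne_of_val_ne (by omega)) (Fin.ne_of_val_ne (by omega))
      (Fin.ne_of_val_ne (by omega)) (Fin.ne_of_val_ne (by omega))
  · rcases hv with h | h | h | h
    · exact Or.inl (Fin.ext h)
    · exact Or.inr (Or.inl (Fin.ext h))
    · exact Or.inr (Or.inr (Or.inl (Fin.ext h)))
    · exact Or.inr (Or.inr (Or.inr (Fin.ext h)))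
  · rcases hw with h | h | h | h
    · exact Or.inl (Fin.ext h)
    · exact Or.inr (Or.inl (Fin.ext h))
    · exact Or.inr (Or.inr (Or.inl (Fin.ext h)))
    · exact Or.inr (Or.inr (Or.inr (Fin.ext h)))

def loI (n i : ℕ) : ℕ :=
  if Mof n = 0 then 4 * i
  else if i = 0 then 0
  else if i ≤ 2 * Mof n + 1 then 4 + 7 * ((i - 1) / 2) + 4 * ((i - 1) % 2)
  else 7 * Mof n + 8 + 4 * (i - (2 * Mof n + 2))

def lenI (n i : ℕ) : ℕ :=
  if 1 ≤ Mof n ∧ 2 ≤ i ∧ i ≤ 2 * Mof n ∧ i % 2 = 0 then 3 else 4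

lemma loI_spec (n i : ℕ) :
    (Mof n = 0 ∧ loI n i = 4 * i ∧ lenI n i = 4) ∨
    (1 ≤ Mof n ∧ i = 0 ∧ loI n i = 0 ∧ lenI n i = 4) ∨
    (1 ≤ Mof n ∧ 1 ≤ i ∧ i ≤ 2 * Mof n ∧ i % 2 = 1 ∧
      loI n i = 4 + 7 * ((i - 1) / 2) ∧ lenI n i = 4) ∨
    (1 ≤ Mof n ∧ 2 ≤ i ∧ i ≤ 2 * Mof n ∧ i % 2 = 0 ∧
      loI n i = 8 + 7 * ((i - 2) / 2) ∧ lenI n i = 3) ∨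
    (1 ≤ Mof n ∧ i = 2 * Mof n + 1 ∧ loI n i = 7 * Mof n + 4 ∧ lenI n i = 4) ∨
    (1 ≤ Mof n ∧ 2 * Mof n + 2 ≤ i ∧
      loI n i = 7 * Mof n + 8 + 4 * (i - (2 * Mof n + 2)) ∧ lenI n i = 4) := by
  unfold loI lenI
  split_ifs <;> omega

def DD (n i : ℕ) : Set (Fin n) :=
  {x | loI n i ≤ x.val ∧ x.val < loI n i + lenI n i}

lemma DD_bound {n i : ℕ} (hi : i < Kof n) : loI n i + lenI n i ≤ n := by
  have af := arith_facts n
  have ls := loI_spec n i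
  omega

lemma DD_clique {n i : ℕ} (hi : i < Kof n) : (Gr n).IsClique (DD n i) := by
  have af := arith_facts n
  have ls := loI_spec n i
  intro x hx y hy hxy
  obtain ⟨hx1, hx2⟩ := hx
  obtain ⟨hy1, hy2⟩ := hy
  have hvne : x.val ≠ y.val := fun h => hxy (Fin.ext h)
  refine ⟨hxy, ?_⟩
  rcases ls with ⟨hM, hlo, hlen⟩ | ⟨hM, hi0, hlo, hlen⟩ | ⟨hM, hi1, hi2, hip, hlo, hlen⟩ |
    ⟨hM, hi1, hi2, hip, hlo, hlen⟩ | ⟨hM, hi0, hlo, hlen⟩ | ⟨hM, hi1, hlo, hlen⟩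
  -- leftover K4s (M = 0)
  · refine ⟨(Lof n + 4 * i, Lof n + 4 * i + 1, Lof n + 4 * i + 2, Lof n + 4 * i + 3),
      Or.inr ⟨i, by omega, rfl⟩, ?_, ?_⟩ <;> (simp only [qmem]; omega)
  -- P
  · exact ⟨(0, 1, 2, 3), Or.inl ⟨by omega, Or.inl rfl⟩, by simp only [qmem]; omega,
      by simp only [qmem]; omega⟩
  -- A_u
  · refine ⟨(4 + 7 * ((i - 1) / 2), 5 + 7 * ((i - 1) / 2), 6 + 7 * ((i - 1) / 2),
      7 + 7 * ((i - 1) / 2)),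
      Or.inl ⟨by omega, Or.inr (Or.inr (Or.inr (Or.inr ⟨(i - 1) / 2, by omega, Or.inl rfl⟩)))⟩,
      ?_, ?_⟩ <;> (simp only [qmem]; omega)
  -- T_u : three edges, three quads
  · set u := (i - 2) / 2 with hu
    have hum : u < Mof n := by omega
    have hmem : ∀ z : Fin n, loI n i ≤ z.val → z.val < loI n i + lenI n i →
        z.val = 8 + 7 * u ∨ z.val = 9 + 7 * u ∨ z.val = 10 + 7 * u := by intro z h1 h2; omega
    have hx' := hmem x hx1 hx2
    have hy' := hmem y hy1 hy2
    -- pair cases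
    rcases hx' with h | h | h <;> rcases hy' with h' | h' | h'
    · omega
    · -- (t0,t1): SP if u = 0 else B_{u-1}
      rcases Nat.eq_zero_or_pos u with h0 | h0
      · exact ⟨(2, 3, 8, 9), Or.inl ⟨by omega, Or.inr (Or.inl rfl)⟩,
          by simp only [qmem]; omega, by simp only [qmem]; omega⟩
      · exact ⟨(9 + 7 * (u - 1), 10 + 7 * (u - 1), 15 + 7 * (u - 1), 16 + 7 * (u - 1)),
          Or.inl ⟨by omega, Or.inr (Or.inr (Or.inr (Or.inr ⟨u - 1, by omega,
            Or.inr (Or.inr ⟨by omega, rfl⟩)⟩)))⟩,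
          by simp only [qmem]; omega, by simp only [qmem]; omega⟩
    · -- (t0,t2): S_u
      exact ⟨(6 + 7 * u, 7 + 7 * u, 8 + 7 * u, 10 + 7 * u),
        Or.inl ⟨by omega, Or.inr (Or.inr (Or.inr (Or.inr ⟨u, hum, Or.inr (Or.inl rfl)⟩)))⟩,
        by simp only [qmem]; omega, by simp only [qmem]; omega⟩
    · rcases Nat.eq_zero_or_pos u with h0 | h0
      · exact ⟨(2, 3, 8, 9), Or.inl ⟨by omega, Or.inr (Or.inl rfl)⟩,
          by simp only [qmem]; omega, by simp only [qmem]; omega⟩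
      · exact ⟨(9 + 7 * (u - 1), 10 + 7 * (u - 1), 15 + 7 * (u - 1), 16 + 7 * (u - 1)),
          Or.inl ⟨by omega, Or.inr (Or.inr (Or.inr (Or.inr ⟨u - 1, by omega,
            Or.inr (Or.inr ⟨by omega, rfl⟩)⟩)))⟩,
          by simp only [qmem]; omega, by simp only [qmem]; omega⟩
    · omega
    · -- (t1,t2): B_u if u+1 < M else SQ
      rcases Nat.lt_or_ge (u + 1) (Mof n) with h0 | h0
      · exact ⟨(9 + 7 * u, 10 + 7 * u, 15 + 7 * u, 16 + 7 * u),
          Or.inl ⟨by omega, Or.inr (Or.inr (Or.inr (Or.inr ⟨u, hum,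
            Or.inr (Or.inr ⟨h0, rfl⟩)⟩)))⟩,
          by simp only [qmem]; omega, by simp only [qmem]; omega⟩
      · exact ⟨(7 * Mof n + 2, 7 * Mof n + 3, 7 * Mof n + 4, 7 * Mof n + 5),
          Or.inl ⟨by omega, Or.inr (Or.inr (Or.inr (Or.inl rfl)))⟩,
          by simp only [qmem]; omega, by simp only [qmem]; omega⟩
    · exact ⟨(6 + 7 * u, 7 + 7 * u, 8 + 7 * u, 10 + 7 * u),
        Or.inl ⟨by omega, Or.inr (Or.inr (Or.inr (Or.inr ⟨u, hum, Or.inr (Or.inl rfl)⟩)))⟩,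
        by simp only [qmem]; omega, by simp only [qmem]; omega⟩
    · rcases Nat.lt_or_ge (u + 1) (Mof n) with h0 | h0
      · exact ⟨(9 + 7 * u, 10 + 7 * u, 15 + 7 * u, 16 + 7 * u),
          Or.inl ⟨by omega, Or.inr (Or.inr (Or.inr (Or.inr ⟨u, hum,
            Or.inr (Or.inr ⟨h0, rfl⟩)⟩)))⟩,
          by simp only [qmem]; omega, by simp only [qmem]; omega⟩
      · exact ⟨(7 * Mof n + 2, 7 * Mof n + 3, 7 * Mof n + 4, 7 * Mof n + 5),
          Or.inl ⟨by omega, Or.inr (Or.inr (Or.inr (Or.inl rfl)))⟩,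
          by simp only [qmem]; omega, by simp only [qmem]; omega⟩
    · omega
  -- Q
  · exact ⟨(7 * Mof n + 4, 7 * Mof n + 5, 7 * Mof n + 6, 7 * Mof n + 7),
      Or.inl ⟨by omega, Or.inr (Or.inr (Or.inl rfl))⟩,
      by simp only [qmem]; omega, by simp only [qmem]; omega⟩
  -- leftover K4s (M ≥ 1)
  · refine ⟨(Lof n + 4 * (i - (2 * Mof n + 2)), Lof n + 4 * (i - (2 * Mof n + 2)) + 1,
      Lof n + 4 * (i - (2 * Mof n + 2)) + 2, Lof n + 4 * (i - (2 * Mof n + 2)) + 3),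
      Or.inr ⟨i - (2 * Mof n + 2), by omega, rfl⟩, ?_, ?_⟩ <;> (simp only [qmem]; omega)

lemma DD_max {n i : ℕ} (hi : i < Kof n) :
    IsMaximalClique (Gr n) (DD n i) ∧ (DD n i).Nontrivial := by
  have af := arith_facts n
  have ls := loI_spec n i
  have hb : loI n i + lenI n i ≤ n := DD_bound hi
  have hlen : 3 ≤ lenI n i := by
    have h2 : lenI n i = if 1 ≤ Mof n ∧ 2 ≤ i ∧ i ≤ 2 * Mof n ∧ i % 2 = 0 then 3 else 4 := rfl
    split_ifs at h2 <;> omega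
  constructor
  · refine ⟨DD_clique hi, ?_⟩
    intro t ht hsub
    refine Set.Subset.antisymm hsub ?_
    intro y hy
    show loI n i ≤ y.val ∧ y.val < loI n i + lenI n i
    have hg : ∀ w : ℕ, ∀ hw1 : loI n i ≤ w, ∀ hw2 : w < loI n i + lenI n i,
        (y.val = w ∨ ∃ q, IsFamQ n q ∧ qmem y.val q ∧ qmem w q) := by
      intro w hw1 hw2
      have hwmem : (⟨w, by omega⟩ : Fin n) ∈ DD n i := ⟨hw1, hw2⟩
      rcases eq_or_ne y ⟨w, by omega⟩ with h | h
      · exact Or.inl (by rw [h])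
      · obtain ⟨hne', q, hqq, hyq, hwq⟩ := ht hy (hsub hwmem) h
        exact Or.inr ⟨q, hqq, hyq, show qmem w q from hwq⟩
    rcases ls with ⟨hM, hlo, hlen4⟩ | ⟨hM, hi0, hlo, hlen4⟩ | ⟨hM, hi1, hi2, hip, hlo, hlen4⟩ |
      ⟨hM, hi1, hi2, hip, hlo, hlen3⟩ | ⟨hM, hi0, hlo, hlen4⟩ | ⟨hM, hi1, hlo, hlen4⟩
    -- leftover, M = 0
    · rcases hg (4 * i) (by omega) (by omega) with h | ⟨q, hqq, hyq, hwq⟩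
      · omega
      · rcases hqq with ⟨hM1, rfl | rfl | rfl | rfl | ⟨u, hu, rfl | rfl | ⟨hu2, rfl⟩⟩⟩ |
          ⟨t', ht', rfl⟩ <;> simp only [qmem] at hyq hwq <;> omega
    -- P
    · rcases hg 0 (by omega) (by omega) with h | ⟨q, hqq, hyq, hwq⟩
      · omega
      · rcases hqq with ⟨hM1, rfl | rfl | rfl | rfl | ⟨u, hu, rfl | rfl | ⟨hu2, rfl⟩⟩⟩ |
          ⟨t', ht', rfl⟩ <;> simp only [qmem] at hyq hwq <;> omega
    -- A_u
    · rcases hg (loI n i) (by omega) (by omega) with h | ⟨q, hqq, hyq, hwq⟩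
      · omega
      · rcases hqq with ⟨hM1, rfl | rfl | rfl | rfl | ⟨u, hu, rfl | rfl | ⟨hu2, rfl⟩⟩⟩ |
          ⟨t', ht', rfl⟩ <;> simp only [qmem] at hyq hwq <;> omega
    -- T_u : three witnesses
    · rcases hg (loI n i) (by omega) (by omega) with h | ⟨q1, hq1, hy1, hw1⟩
      · omega
      rcases hg (loI n i + 1) (by omega) (by omega) with h | ⟨q2, hq2, hy2, hw2⟩
      · omega
      rcases hg (loI n i + 2) (by omega) (by omega) with h | ⟨q3, hq3, hy3, hw3⟩
      · omega
      rcases hq1 with ⟨hM1, rfl | rfl | rfl | rfl | ⟨u1, hu1, rfl | rfl | ⟨hu12, rfl⟩⟩⟩ |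
          ⟨t1, ht1, rfl⟩ <;> simp only [qmem] at hy1 hw1 <;> try omega
      all_goals (
        rcases hq2 with ⟨hM2, rfl | rfl | rfl | rfl | ⟨u2, hu2, rfl | rfl | ⟨hu22, rfl⟩⟩⟩ |
          ⟨t2, ht2, rfl⟩ <;> simp only [qmem] at hy2 hw2 <;> try omega)
      all_goals (
        rcases hq3 with ⟨hM3, rfl | rfl | rfl | rfl | ⟨u3, hu3, rfl | rfl | ⟨hu32, rfl⟩⟩⟩ |
          ⟨t3, ht3, rfl⟩ <;> simp only [qmem] at hy3 hw3 <;> omega)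
    -- Q
    · rcases hg (7 * Mof n + 7) (by omega) (by omega) with h | ⟨q, hqq, hyq, hwq⟩
      · omega
      · rcases hqq with ⟨hM1, rfl | rfl | rfl | rfl | ⟨u, hu, rfl | rfl | ⟨hu2, rfl⟩⟩⟩ |
          ⟨t', ht', rfl⟩ <;> simp only [qmem] at hyq hwq <;> omega
    -- leftover, M ≥ 1
    · rcases hg (loI n i) (by omega) (by omega) with h | ⟨q, hqq, hyq, hwq⟩
      · omega
      · rcases hqq with ⟨hM1, rfl | rfl | rfl | rfl | ⟨u, hu, rfl | rfl | ⟨hu2, rfl⟩⟩⟩ |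
          ⟨t', ht', rfl⟩ <;> simp only [qmem] at hyq hwq <;> omega
  · exact ⟨⟨loI n i, by omega⟩, ⟨le_rfl, show loI n i < loI n i + lenI n i by omega⟩,
      ⟨loI n i + 1, by omega⟩,
      ⟨show loI n i ≤ loI n i + 1 by omega, show loI n i + 1 < loI n i + lenI n i by omega⟩,
      Fin.ne_of_val_ne (show loI n i ≠ loI n i + 1 by omega)⟩

lemma loI_mono {n i j : ℕ} (hij : i < j) (hj : j < Kof n) :
    loI n i + lenI n i ≤ loI n j := by
  have af := arith_facts n
  have l1 := loI_spec n i
  have l2 := loI_spec n j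
  omega

lemma gr_transversal (n : ℕ) {U : Set (Fin n)} (hU : CliqueTransversal (Gr n) U) :
    2 * (n - 1) / 7 ≤ U.ncard := by
  classical
  have af := arith_facts n
  have hK : 2 * (n - 1) / 7 ≤ Kof n := by omega
  suffices h : Kof n ≤ U.ncard by omega
  have hchoice : ∀ i : Fin (Kof n), ∃ x : Fin n, x ∈ DD n i.val ∧ x ∈ U := by
    intro i
    obtain ⟨hmax, hnt⟩ := DD_max i.isLt
    obtain ⟨x, hx1, hx2⟩ := hU _ hmax hnt
    exact ⟨x, hx1, hx2⟩
  choose f hf1 hf2 using hchoice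
  have hinj : Function.Injective f := by
    intro i j hij
    by_contra hne
    have h1 := hf1 i
    have h2 := hf1 j
    obtain ⟨a1, a2⟩ := h1
    obtain ⟨b1, b2⟩ := h2
    have e := congrArg Fin.val hij
    have hvne : i.val ≠ j.val := fun h => hne (Fin.ext h)
    rcases Nat.lt_or_ge i.val j.val with h | h
    · have := loI_mono h j.isLt
      omega
    · have hlt : j.val < i.val := by omega
      have := loI_mono hlt i.isLt
      omega
  have hcard : Kof n = (Finset.univ.image f).card := by
    rw [Finset.card_image_of_injective _ hinj, Finset.card_univ, Fintype.card_fin]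
  rw [hcard]
  have hsubset : (Finset.univ.image f) ⊆ U.toFinset := by
    intro x hx
    simp only [Finset.mem_image] at hx
    obtain ⟨i, -, rfl⟩ := hx
    exact Set.mem_toFinset.mpr (hf2 i)
  calc (Finset.univ.image f).card ≤ U.toFinset.card := Finset.card_le_card hsubset
    _ = U.ncard := (Set.ncard_eq_toFinset_card' U).symm

end FC

/-- For every `n ≥ 5` there exists an `n`-vertex 4-chordal graph with no clique
transversal with fewer than `⌊2(n-1)/7⌋` vertices. -/
theorem exists_four_chordal_with_large_clique_transversal_number (n : ℕ) (hn : 5 ≤ n) :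
    ∃ G : SimpleGraph (Fin n), KChordal 4 G ∧
      ∀ U : Set (Fin n), CliqueTransversal G U → 2 * (n - 1) / 7 ≤ U.ncard :=
  ⟨FC.Gr n, ⟨FC.gr_chordal n, FC.gr_edge_k4 n⟩, fun _ hU => FC.gr_transversal n hU⟩
end

section
/- For every integer k ≥ 0, there exists a 4-chordal graph on exactly 7k+8 vertices that contains 2k+2 pairwise vertex-disjoint maximal non-trivial cliques; consequently, every clique transversal of this graph has at least 2k+2 vertices. -/
open SimpleGraph

section Construction

set_option maxHeartbeats 1000000

/-- `link k j i r` : the top pair of quad `j` is adjacent to vertex `r` of triangle `i`. -/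
def link (k j i r : ℕ) : Prop :=
  (j = 0 ∧ i = 0 ∧ r ≤ 1) ∨ (1 ≤ j ∧ j ≤ k ∧ i + 1 = j ∧ r % 2 = 0) ∨
  (j = k + 1 ∧ i + 1 = k ∧ 1 ≤ r)

/-- adjacency relation of the construction, on natural number codes. -/
def adjP (k x y : ℕ) : Prop :=
  x < 7*k+8 ∧ y < 7*k+8 ∧ x ≠ y ∧
  ( (x < 4*k+8 ∧ y < 4*k+8 ∧ x/4 = y/4)
  ∨ (4*k+8 ≤ x ∧ 4*k+8 ≤ y ∧ (x-(4*k+8))/3 = (y-(4*k+8))/3)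
  ∨ (4*k+8 ≤ x ∧ 4*k+8 ≤ y ∧
      ((x-(4*k+8))/3 + 1 = (y-(4*k+8))/3 ∧ (x-(4*k+8))%3 ≥ 1 ∧ (y-(4*k+8))%3 ≤ 1
      ∨ (y-(4*k+8))/3 + 1 = (x-(4*k+8))/3 ∧ (y-(4*k+8))%3 ≥ 1 ∧ (x-(4*k+8))%3 ≤ 1))
  ∨ (x < 4*k+8 ∧ 4*k+8 ≤ y ∧ x%4 ≥ 2 ∧ link k (x/4) ((y-(4*k+8))/3) ((y-(4*k+8))%3))
  ∨ (y < 4*k+8 ∧ 4*k+8 ≤ x ∧ y%4 ≥ 2 ∧ link k (y/4) ((x-(4*k+8))/3) ((x-(4*k+8))%3)) )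

lemma adjP_symm {k x y : ℕ} (h : adjP k x y) : adjP k y x := by
  obtain ⟨hx, hy, hne, hc⟩ := h
  refine ⟨hy, hx, hne.symm, ?_⟩
  rcases hc with c | c | c | c | c
  · exact Or.inl ⟨c.2.1, c.1, c.2.2.symm⟩
  · exact Or.inr (Or.inl ⟨c.2.1, c.1, c.2.2.symm⟩)
  · exact Or.inr (Or.inr (Or.inl ⟨c.2.1, c.1, c.2.2.symm⟩))
  · exact Or.inr (Or.inr (Or.inr (Or.inr c)))
  · exact Or.inr (Or.inr (Or.inr (Or.inl c)))

/-- The graph of the construction. -/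
def myG (k : ℕ) : SimpleGraph (Fin (7*k+8)) where
  Adj x y := adjP k x.val y.val
  symm := ⟨fun _ _ h => adjP_symm h⟩
  loopless := ⟨fun _ h => h.2.2.1 rfl⟩

lemma myG_adj (k : ℕ) {x y : Fin (7*k+8)} : (myG k).Adj x y ↔ adjP k x.val y.val := Iff.rfl

/-- perfect elimination property in the natural order, numeric version -/
lemma peoN (k v w x : ℕ) (hvw : adjP k v w) (hvx : adjP k v x)
    (h1 : v < w) (h2 : v < x) (hne : w ≠ x) : adjP k w x := by
  obtain ⟨hv', hw', -, cvw⟩ := hvw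
  obtain ⟨-, hx', -, cvx⟩ := hvx
  refine ⟨hw', hx', hne, ?_⟩
  rcases cvw with c | c | c | c | c <;> rcases cvx with d | d | d | d | d
  · exact Or.inl (by omega)
  · exfalso; omega
  · exfalso; omega
  · refine Or.inr (Or.inr (Or.inr (Or.inl ⟨by omega, by omega, by omega, ?_⟩)))
    unfold link at *; omega
  · exfalso; omega
  · exfalso; omega
  · exact Or.inr (Or.inl (by omega))
  · refine Or.inr (Or.inr (Or.inl ?_)); omega
  · exfalso; omega
  · exfalso; omega
  · exfalso; omega
  · refine Or.inr (Or.inr (Or.inl ?_)); omega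
  · refine Or.inr (Or.inl ?_); omega
  · exfalso; omega
  · exfalso; omega
  · refine Or.inr (Or.inr (Or.inr (Or.inr ⟨by omega, by omega, by omega, ?_⟩)))
    unfold link at *; omega
  · exfalso; omega
  · exfalso; omega
  · refine Or.inr (Or.inl ?_); unfold link at *; omega
  · exfalso; omega
  · exfalso; omega
  · exfalso; omega
  · exfalso; omega
  · exfalso; omega
  · exfalso; omega

lemma peo (k : ℕ) (v w x : Fin (7*k+8)) (hvw : (myG k).Adj v w) (hvx : (myG k).Adj v x)
    (h1 : v.val < w.val) (h2 : v.val < x.val) (hne : w ≠ x) : (myG k).Adj w x :=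
  peoN k v.val w.val x.val hvw hvx h1 h2 (fun h => hne (Fin.ext h))

lemma modfact (x n : ℕ) (h2 : x < 2*n) :
    (x < n ∧ x % n = x) ∨ (n ≤ x ∧ x % n = x - n) := by
  rcases Nat.lt_or_ge x n with h | h
  · exact Or.inl ⟨h, Nat.mod_eq_of_lt h⟩
  · exact Or.inr ⟨h, by rw [Nat.mod_eq_sub_mod h, Nat.mod_eq_of_lt (by omega)]⟩

lemma mod_eq_one (X n : ℕ) (h : X % n = 1) (hX : X < 2*n) (hn : 0 < n) :
    X = 1 ∨ X = n + 1 := by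
  rcases modfact X n hX with ⟨_, e⟩ | ⟨_, e⟩ <;> omega

lemma cga {n : ℕ} (hn : 2 ≤ n) (i : Fin n) :
    (cycleGraph n).Adj i ⟨(i.val + 1) % n, Nat.mod_lt _ (by omega)⟩ := by
  rw [cycleGraph_adj']
  right
  rw [Fin.sub_def]
  show ((n - i.val) + ((i.val + 1) % n)) % n = 1
  have hi := i.isLt
  rcases modfact (i.val + 1) n (by omega) with ⟨h, e⟩ | ⟨h, e⟩ <;> rw [e] <;>
    [rcases modfact ((n - i.val) + (i.val + 1)) n (by omega) with ⟨h', e'⟩ | ⟨h', e'⟩;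
     rcases modfact ((n - i.val) + (i.val + 1 - n)) n (by omega) with ⟨h', e'⟩ | ⟨h', e'⟩] <;>
    rw [e'] <;> omega

lemma myG_chordal (k : ℕ) : Chordal (myG k) := by
  intro n hn
  constructor
  intro f
  have n0 : 0 < n := by omega
  obtain ⟨i, -, hmin⟩ := Finset.exists_min_image (Finset.univ : Finset (Fin n))
    (fun j => (f j).val) ⟨⟨0, n0⟩, Finset.mem_univ _⟩
  have hi := i.isLt
  set a : Fin n := ⟨(i.val + 1) % n, Nat.mod_lt _ n0⟩ with ha
  set b : Fin n := ⟨(i.val + (n - 1)) % n, Nat.mod_lt _ n0⟩ with hb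
  have hav : a.val = (i.val + 1) % n := rfl
  have hbv : b.val = (i.val + (n - 1)) % n := rfl
  have h1 : (cycleGraph n).Adj i a := cga (by omega) i
  have h2 : (cycleGraph n).Adj b i := by
    have h := cga (show 2 ≤ n by omega) b
    have heq : (⟨(b.val + 1) % n, Nat.mod_lt _ n0⟩ : Fin n) = i := by
      apply Fin.ext
      show (b.val + 1) % n = i.val
      rw [hbv]
      rcases modfact (i.val + (n - 1)) n (by omega) with ⟨h', e'⟩ | ⟨h', e'⟩ <;> rw [e'] <;>
        [rcases modfact (i.val + (n - 1) + 1) n (by omega) with ⟨h'', e''⟩ | ⟨h'', e''⟩;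
         rcases modfact (i.val + (n - 1) - n + 1) n (by omega) with ⟨h'', e''⟩ | ⟨h'', e''⟩] <;>
        rw [e''] <;> omega
    rwa [heq] at h
  have ga : (myG k).Adj (f i) (f a) := f.map_adj_iff.mpr h1
  have gb : (myG k).Adj (f i) (f b) := ((f.map_adj_iff).mpr h2).symm
  rcases modfact (i.val + 1) n (by omega) with ⟨hA, eA⟩ | ⟨hA, eA⟩ <;>
  rcases modfact (i.val + (n - 1)) n (by omega) with ⟨hB, eB⟩ | ⟨hB, eB⟩ <;>
  · have hne : f a ≠ f b := by
      intro h
      have : a.val = b.val := congrArg Fin.val (f.injective h)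
      rw [hav, hbv, eA, eB] at this
      omega
    have hlta : (f i).val < (f a).val :=
      lt_of_le_of_ne (hmin a (Finset.mem_univ a)) (fun h => ga.ne (Fin.ext h))
    have hltb : (f i).val < (f b).val :=
      lt_of_le_of_ne (hmin b (Finset.mem_univ b)) (fun h => gb.ne (Fin.ext h))
    have gab : (myG k).Adj (f a) (f b) := peo k (f i) (f a) (f b) ga gb hlta hltb hne
    have hcyc : (cycleGraph n).Adj a b := f.map_adj_iff.mp gab
    rw [cycleGraph_adj', Fin.sub_def, Fin.sub_def] at hcyc
    simp only [hav, hbv] at hcyc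
    rw [eA, eB] at hcyc
    rcases hcyc with hc | hc <;>
      · have h4 := mod_eq_one _ n hc (by omega) (by omega)
        omega

lemma adj_quadQ (k x y : ℕ) (h1 : x < 4*k+8) (h2 : y < 4*k+8) (h3 : x/4 = y/4)
    (h4 : x ≠ y) : adjP k x y :=
  ⟨by omega, by omega, h4, Or.inl ⟨h1, h2, h3⟩⟩

lemma adj_triT (k x y : ℕ) (hx : x < 7*k+8) (hy : y < 7*k+8) (h1 : 4*k+8 ≤ x)
    (h2 : 4*k+8 ≤ y) (h3 : (x-(4*k+8))/3 = (y-(4*k+8))/3) (h4 : x ≠ y) : adjP k x y :=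
  ⟨hx, hy, h4, Or.inr (Or.inl ⟨h1, h2, h3⟩)⟩

lemma adj_consecC (k x y : ℕ) (hx : x < 7*k+8) (hy : y < 7*k+8) (h1 : 4*k+8 ≤ x)
    (h2 : 4*k+8 ≤ y) (h3 : (x-(4*k+8))/3 + 1 = (y-(4*k+8))/3) (h4 : (x-(4*k+8))%3 ≥ 1)
    (h5 : (y-(4*k+8))%3 ≤ 1) : adjP k x y :=
  ⟨hx, hy, by omega, Or.inr (Or.inr (Or.inl ⟨h1, h2, Or.inl ⟨h3, h4, h5⟩⟩))⟩

lemma adj_linkL (k x y : ℕ) (hy : y < 7*k+8) (h1 : x < 4*k+8) (h2 : 4*k+8 ≤ y)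
    (h3 : x%4 ≥ 2) (h4 : link k (x/4) ((y-(4*k+8))/3) ((y-(4*k+8))%3)) : adjP k x y :=
  ⟨by omega, hy, by omega, Or.inr (Or.inr (Or.inr (Or.inl ⟨h1, h2, h3, h4⟩)))⟩

lemma mk4 (k : ℕ) (e1 e2 e3 e4 : ℕ) (v w : Fin (7*k+8))
    (a12 : adjP k e1 e2) (a13 : adjP k e1 e3) (a14 : adjP k e1 e4)
    (a23 : adjP k e2 e3) (a24 : adjP k e2 e4) (a34 : adjP k e3 e4)
    (hv : v.val = e1 ∨ v.val = e2 ∨ v.val = e3 ∨ v.val = e4)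
    (hw : w.val = e1 ∨ w.val = e2 ∨ w.val = e3 ∨ w.val = e4) :
    ∃ s : Set (Fin (7*k+8)), (myG k).IsClique s ∧ s.ncard = 4 ∧ v ∈ s ∧ w ∈ s := by
  have h1 : e1 < 7*k+8 := a12.1
  have h2 : e2 < 7*k+8 := a12.2.1
  have h3 : e3 < 7*k+8 := a34.1
  have h4 : e4 < 7*k+8 := a34.2.1
  set x1 : Fin (7*k+8) := ⟨e1, h1⟩ with hx1
  set x2 : Fin (7*k+8) := ⟨e2, h2⟩ with hx2
  set x3 : Fin (7*k+8) := ⟨e3, h3⟩ with hx3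
  set x4 : Fin (7*k+8) := ⟨e4, h4⟩ with hx4
  have d12 : x1 ≠ x2 := fun h => a12.2.2.1 (congrArg Fin.val h)
  have d13 : x1 ≠ x3 := fun h => a13.2.2.1 (congrArg Fin.val h)
  have d14 : x1 ≠ x4 := fun h => a14.2.2.1 (congrArg Fin.val h)
  have d23 : x2 ≠ x3 := fun h => a23.2.2.1 (congrArg Fin.val h)
  have d24 : x2 ≠ x4 := fun h => a24.2.2.1 (congrArg Fin.val h)
  have d34 : x3 ≠ x4 := fun h => a34.2.2.1 (congrArg Fin.val h)
  refine ⟨{x1, x2, x3, x4}, ?_, ?_, ?_, ?_⟩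
  · intro p hp q hq hpq
    simp only [Set.mem_insert_iff, Set.mem_singleton_iff] at hp hq
    rcases hp with rfl | rfl | rfl | rfl <;> rcases hq with rfl | rfl | rfl | rfl <;>
      first
        | exact absurd rfl hpq
        | exact a12 | exact a13 | exact a14 | exact a23 | exact a24 | exact a34
        | exact adjP_symm a12 | exact adjP_symm a13 | exact adjP_symm a14
        | exact adjP_symm a23 | exact adjP_symm a24 | exact adjP_symm a34
  · rw [Set.ncard_insert_of_notMem (by simp [d12, d13, d14])
        ((Set.finite_singleton x4).insert x3 |>.insert x2),
      Set.ncard_insert_of_notMem (by simp [d23, d24]) ((Set.finite_singleton x4).insert x3),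
      Set.ncard_insert_of_notMem (by simp [d34]) (Set.finite_singleton x4),
      Set.ncard_singleton]
  · rcases hv with h | h | h | h
    · exact Or.inl (Fin.ext h)
    · exact Or.inr (Or.inl (Fin.ext h))
    · exact Or.inr (Or.inr (Or.inl (Fin.ext h)))
    · exact Or.inr (Or.inr (Or.inr (Fin.ext h)))
  · rcases hw with h | h | h | h
    · exact Or.inl (Fin.ext h)
    · exact Or.inr (Or.inl (Fin.ext h))
    · exact Or.inr (Or.inr (Or.inl (Fin.ext h)))
    · exact Or.inr (Or.inr (Or.inr (Fin.ext h)))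

lemma edge_in_K4 (k : ℕ) (v w : Fin (7*k+8)) (h : (myG k).Adj v w) :
    ∃ s : Set (Fin (7*k+8)), (myG k).IsClique s ∧ s.ncard = 4 ∧ v ∈ s ∧ w ∈ s := by
  obtain ⟨hv, hw, hne, hc⟩ := (myG_adj k).mp h
  rcases hc with c | c | c | c | c
  · -- both in the same quad
    exact mk4 k (4*(v.val/4)) (4*(v.val/4)+1) (4*(v.val/4)+2) (4*(v.val/4)+3) v w
      (adj_quadQ k _ _ (by omega) (by omega) (by omega) (by omega)) (adj_quadQ k _ _ (by omega) (by omega) (by omega) (by omega)) (adj_quadQ k _ _ (by omega) (by omega) (by omega) (by omega)) (adj_quadQ k _ _ (by omega) (by omega) (by omega) (by omega)) (adj_quadQ k _ _ (by omega) (by omega) (by omega) (by omega)) (adj_quadQ k _ _ (by omega) (by omega) (by omega) (by omega)) (by omega) (by omega)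
  · -- same triangle
    have hsplit : (((v.val-(4*k+8))%3 = 0 ∧ (w.val-(4*k+8))%3 = 1) ∨ ((v.val-(4*k+8))%3 = 1 ∧ (w.val-(4*k+8))%3 = 0))
      ∨ (((v.val-(4*k+8))%3 = 1 ∧ (w.val-(4*k+8))%3 = 2) ∨ ((v.val-(4*k+8))%3 = 2 ∧ (w.val-(4*k+8))%3 = 1))
      ∨ (((v.val-(4*k+8))%3 = 0 ∧ (w.val-(4*k+8))%3 = 2) ∨ ((v.val-(4*k+8))%3 = 2 ∧ (w.val-(4*k+8))%3 = 0)) := by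
      omega
    rcases hsplit with hs | hs | hs
    · rcases Nat.eq_zero_or_pos ((v.val - (4*k+8))/3) with hz | hz
      · -- first triangle, edge ab, quad 0 pair
        exact mk4 k (2) (3) (4*k+8) (4*k+8+1) v w
          (adj_quadQ k _ _ (by omega) (by omega) (by omega) (by omega)) (adj_linkL k _ _ (by omega) (by omega) (by omega) (by omega) (by unfold link; omega)) (adj_linkL k _ _ (by omega) (by omega) (by omega) (by omega) (by unfold link; omega)) (adj_linkL k _ _ (by omega) (by omega) (by omega) (by omega) (by unfold link; omega)) (adj_linkL k _ _ (by omega) (by omega) (by omega) (by omega) (by unfold link; omega)) (adj_triT k _ _ (by omega) (by omega) (by omega) (by omega) (by omega) (by omega)) (by omega) (by omega)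
      · -- edge ab of triangle i ≥ 1, helped by b,c of triangle i-1
        exact mk4 k (4*k+8+3*((v.val - (4*k+8))/3)-2) (4*k+8+3*((v.val - (4*k+8))/3)-1) (4*k+8+3*((v.val - (4*k+8))/3)) (4*k+8+3*((v.val - (4*k+8))/3)+1) v w
          (adj_triT k _ _ (by omega) (by omega) (by omega) (by omega) (by omega) (by omega)) (adj_consecC k _ _ (by omega) (by omega) (by omega) (by omega) (by omega) (by omega) (by omega)) (adj_consecC k _ _ (by omega) (by omega) (by omega) (by omega) (by omega) (by omega) (by omega)) (adj_consecC k _ _ (by omega) (by omega) (by omega) (by omega) (by omega) (by omega) (by omega)) (adj_consecC k _ _ (by omega) (by omega) (by omega) (by omega) (by omega) (by omega) (by omega)) (adj_triT k _ _ (by omega) (by omega) (by omega) (by omega) (by omega) (by omega)) (by omega) (by omega)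
    · -- edge bc
      have hbd : (v.val - (4*k+8))/3 + 1 = k ∨ (v.val - (4*k+8))/3 + 1 < k := by omega
      rcases hbd with hl | hl
      · -- last triangle: quad k+1 pair
        exact mk4 k (4*k+6) (4*k+7) (4*k+8+3*((v.val - (4*k+8))/3)+1) (4*k+8+3*((v.val - (4*k+8))/3)+2) v w
          (adj_quadQ k _ _ (by omega) (by omega) (by omega) (by omega)) (adj_linkL k _ _ (by omega) (by omega) (by omega) (by omega) (by unfold link; omega)) (adj_linkL k _ _ (by omega) (by omega) (by omega) (by omega) (by unfold link; omega)) (adj_linkL k _ _ (by omega) (by omega) (by omega) (by omega) (by unfold link; omega)) (adj_linkL k _ _ (by omega) (by omega) (by omega) (by omega) (by unfold link; omega)) (adj_triT k _ _ (by omega) (by omega) (by omega) (by omega) (by omega) (by omega)) (by omega) (by omega)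
      · -- helped by a,b of next triangle
        exact mk4 k (4*k+8+3*((v.val - (4*k+8))/3)+1) (4*k+8+3*((v.val - (4*k+8))/3)+2) (4*k+8+3*((v.val - (4*k+8))/3)+3) (4*k+8+3*((v.val - (4*k+8))/3)+4) v w
          (adj_triT k _ _ (by omega) (by omega) (by omega) (by omega) (by omega) (by omega)) (adj_consecC k _ _ (by omega) (by omega) (by omega) (by omega) (by omega) (by omega) (by omega)) (adj_consecC k _ _ (by omega) (by omega) (by omega) (by omega) (by omega) (by omega) (by omega)) (adj_consecC k _ _ (by omega) (by omega) (by omega) (by omega) (by omega) (by omega) (by omega)) (adj_consecC k _ _ (by omega) (by omega) (by omega) (by omega) (by omega) (by omega) (by omega)) (adj_triT k _ _ (by omega) (by omega) (by omega) (by omega) (by omega) (by omega)) (by omega) (by omega)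
    · -- edge ca, helped by quad i+1 pair
      exact mk4 k (4*(((v.val - (4*k+8))/3)+1)+2) (4*(((v.val - (4*k+8))/3)+1)+3) (4*k+8+3*((v.val - (4*k+8))/3)) (4*k+8+3*((v.val - (4*k+8))/3)+2) v w
        (adj_quadQ k _ _ (by omega) (by omega) (by omega) (by omega)) (adj_linkL k _ _ (by omega) (by omega) (by omega) (by omega) (by unfold link; omega)) (adj_linkL k _ _ (by omega) (by omega) (by omega) (by omega) (by unfold link; omega)) (adj_linkL k _ _ (by omega) (by omega) (by omega) (by omega) (by unfold link; omega)) (adj_linkL k _ _ (by omega) (by omega) (by omega) (by omega) (by unfold link; omega)) (adj_triT k _ _ (by omega) (by omega) (by omega) (by omega) (by omega) (by omega)) (by omega) (by omega)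
  · -- consecutive triangles
    rcases c.2.2 with d | d
    · exact mk4 k (4*k+8+3*((v.val - (4*k+8))/3)+1) (4*k+8+3*((v.val - (4*k+8))/3)+2) (4*k+8+3*((v.val - (4*k+8))/3)+3) (4*k+8+3*((v.val - (4*k+8))/3)+4) v w
        (adj_triT k _ _ (by omega) (by omega) (by omega) (by omega) (by omega) (by omega)) (adj_consecC k _ _ (by omega) (by omega) (by omega) (by omega) (by omega) (by omega) (by omega)) (adj_consecC k _ _ (by omega) (by omega) (by omega) (by omega) (by omega) (by omega) (by omega)) (adj_consecC k _ _ (by omega) (by omega) (by omega) (by omega) (by omega) (by omega) (by omega)) (adj_consecC k _ _ (by omega) (by omega) (by omega) (by omega) (by omega) (by omega) (by omega)) (adj_triT k _ _ (by omega) (by omega) (by omega) (by omega) (by omega) (by omega)) (by omega) (by omega)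
    · exact mk4 k (4*k+8+3*((w.val - (4*k+8))/3)+1) (4*k+8+3*((w.val - (4*k+8))/3)+2) (4*k+8+3*((w.val - (4*k+8))/3)+3) (4*k+8+3*((w.val - (4*k+8))/3)+4) v w
        (adj_triT k _ _ (by omega) (by omega) (by omega) (by omega) (by omega) (by omega)) (adj_consecC k _ _ (by omega) (by omega) (by omega) (by omega) (by omega) (by omega) (by omega)) (adj_consecC k _ _ (by omega) (by omega) (by omega) (by omega) (by omega) (by omega) (by omega)) (adj_consecC k _ _ (by omega) (by omega) (by omega) (by omega) (by omega) (by omega) (by omega)) (adj_consecC k _ _ (by omega) (by omega) (by omega) (by omega) (by omega) (by omega) (by omega)) (adj_triT k _ _ (by omega) (by omega) (by omega) (by omega) (by omega) (by omega)) (by omega) (by omega)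
  · -- v in a quad pair, w in a triangle
    rcases c.2.2.2 with l | l | l
    · exact mk4 k (2) (3) (4*k+8) (4*k+8+1) v w
        (adj_quadQ k _ _ (by omega) (by omega) (by omega) (by omega)) (adj_linkL k _ _ (by omega) (by omega) (by omega) (by omega) (by unfold link; omega)) (adj_linkL k _ _ (by omega) (by omega) (by omega) (by omega) (by unfold link; omega)) (adj_linkL k _ _ (by omega) (by omega) (by omega) (by omega) (by unfold link; omega)) (adj_linkL k _ _ (by omega) (by omega) (by omega) (by omega) (by unfold link; omega)) (adj_triT k _ _ (by omega) (by omega) (by omega) (by omega) (by omega) (by omega)) (by omega) (by omega)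
    · exact mk4 k (4*(v.val/4)+2) (4*(v.val/4)+3) (4*k+5+3*(v.val/4)) (4*k+7+3*(v.val/4)) v w
        (adj_quadQ k _ _ (by omega) (by omega) (by omega) (by omega)) (adj_linkL k _ _ (by omega) (by omega) (by omega) (by omega) (by unfold link; omega)) (adj_linkL k _ _ (by omega) (by omega) (by omega) (by omega) (by unfold link; omega)) (adj_linkL k _ _ (by omega) (by omega) (by omega) (by omega) (by unfold link; omega)) (adj_linkL k _ _ (by omega) (by omega) (by omega) (by omega) (by unfold link; omega)) (adj_triT k _ _ (by omega) (by omega) (by omega) (by omega) (by omega) (by omega)) (by omega) (by omega)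
    · exact mk4 k (4*k+6) (4*k+7) (7*k+6) (7*k+7) v w
        (adj_quadQ k _ _ (by omega) (by omega) (by omega) (by omega)) (adj_linkL k _ _ (by omega) (by omega) (by omega) (by omega) (by unfold link; omega)) (adj_linkL k _ _ (by omega) (by omega) (by omega) (by omega) (by unfold link; omega)) (adj_linkL k _ _ (by omega) (by omega) (by omega) (by omega) (by unfold link; omega)) (adj_linkL k _ _ (by omega) (by omega) (by omega) (by omega) (by unfold link; omega)) (adj_triT k _ _ (by omega) (by omega) (by omega) (by omega) (by omega) (by omega)) (by omega) (by omega)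
  · -- w in a quad pair, v in a triangle
    rcases c.2.2.2 with l | l | l
    · exact mk4 k (2) (3) (4*k+8) (4*k+8+1) v w
        (adj_quadQ k _ _ (by omega) (by omega) (by omega) (by omega)) (adj_linkL k _ _ (by omega) (by omega) (by omega) (by omega) (by unfold link; omega)) (adj_linkL k _ _ (by omega) (by omega) (by omega) (by omega) (by unfold link; omega)) (adj_linkL k _ _ (by omega) (by omega) (by omega) (by omega) (by unfold link; omega)) (adj_linkL k _ _ (by omega) (by omega) (by omega) (by omega) (by unfold link; omega)) (adj_triT k _ _ (by omega) (by omega) (by omega) (by omega) (by omega) (by omega)) (by omega) (by omega)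
    · exact mk4 k (4*(w.val/4)+2) (4*(w.val/4)+3) (4*k+5+3*(w.val/4)) (4*k+7+3*(w.val/4)) v w
        (adj_quadQ k _ _ (by omega) (by omega) (by omega) (by omega)) (adj_linkL k _ _ (by omega) (by omega) (by omega) (by omega) (by unfold link; omega)) (adj_linkL k _ _ (by omega) (by omega) (by omega) (by omega) (by unfold link; omega)) (adj_linkL k _ _ (by omega) (by omega) (by omega) (by omega) (by unfold link; omega)) (adj_linkL k _ _ (by omega) (by omega) (by omega) (by omega) (by unfold link; omega)) (adj_triT k _ _ (by omega) (by omega) (by omega) (by omega) (by omega) (by omega)) (by omega) (by omega)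
    · exact mk4 k (4*k+6) (4*k+7) (7*k+6) (7*k+7) v w
        (adj_quadQ k _ _ (by omega) (by omega) (by omega) (by omega)) (adj_linkL k _ _ (by omega) (by omega) (by omega) (by omega) (by unfold link; omega)) (adj_linkL k _ _ (by omega) (by omega) (by omega) (by omega) (by unfold link; omega)) (adj_linkL k _ _ (by omega) (by omega) (by omega) (by omega) (by unfold link; omega)) (adj_linkL k _ _ (by omega) (by omega) (by omega) (by omega) (by unfold link; omega)) (adj_triT k _ _ (by omega) (by omega) (by omega) (by omega) (by omega) (by omega)) (by omega) (by omega)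

/-- The chosen cliques: quads for `c < k+2`, triangles for `c ≥ k+2`. -/
def cliqueSet (k c : ℕ) : Set (Fin (7*k+8)) :=
  {x | (c < k+2 ∧ x.val < 4*k+8 ∧ x.val/4 = c) ∨
       (k+2 ≤ c ∧ 4*k+8 ≤ x.val ∧ (x.val - (4*k+8))/3 + (k+2) = c)}

lemma cliqueSet_mem (k c : ℕ) (x : Fin (7*k+8)) :
    x ∈ cliqueSet k c ↔ ((c < k+2 ∧ x.val < 4*k+8 ∧ x.val/4 = c) ∨
      (k+2 ≤ c ∧ 4*k+8 ≤ x.val ∧ (x.val - (4*k+8))/3 + (k+2) = c)) := Iff.rfl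

lemma memQ (k c a : ℕ) (h : a < 7*k+8) (h1 : c < k+2) (h2 : a < 4*k+8) (h3 : a/4 = c) :
    (⟨a, h⟩ : Fin (7*k+8)) ∈ cliqueSet k c := Or.inl ⟨h1, h2, h3⟩

lemma memT (k c a : ℕ) (h : a < 7*k+8) (h1 : k+2 ≤ c) (h2 : 4*k+8 ≤ a)
    (h3 : (a - (4*k+8))/3 + (k+2) = c) : (⟨a, h⟩ : Fin (7*k+8)) ∈ cliqueSet k c :=
  Or.inr ⟨h1, h2, h3⟩

lemma quad_link_of_adj (k : ℕ) (u y : ℕ) (hu : u < 4*k+8) (hy : 4*k+8 ≤ y)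
    (h : adjP k u y) :
    u%4 ≥ 2 ∧ link k (u/4) ((y-(4*k+8))/3) ((y-(4*k+8))%3) := by
  rcases h.2.2.2 with c | c | c | c | c
  · exfalso; omega
  · exfalso; omega
  · exfalso; omega
  · exact ⟨c.2.2.1, c.2.2.2⟩
  · exfalso; omega

lemma tri_cases_of_adj (k : ℕ) (u y : ℕ) (hu : 4*k+8 ≤ u) (hy : 4*k+8 ≤ y)
    (h : adjP k u y) :
    (u-(4*k+8))/3 = (y-(4*k+8))/3 ∨
    ((u-(4*k+8))/3 + 1 = (y-(4*k+8))/3 ∧ (u-(4*k+8))%3 ≥ 1 ∧ (y-(4*k+8))%3 ≤ 1) ∨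
    ((y-(4*k+8))/3 + 1 = (u-(4*k+8))/3 ∧ (y-(4*k+8))%3 ≥ 1 ∧ (u-(4*k+8))%3 ≤ 1) := by
  rcases h.2.2.2 with c | c | c | c | c
  · exfalso; omega
  · exact Or.inl c.2.2
  · rcases c.2.2 with d | d
    · exact Or.inr (Or.inl d)
    · exact Or.inr (Or.inr d)
  · exfalso; omega
  · exfalso; omega

lemma cliqueSet_good (k c : ℕ) (hc : c < 2*k+2) :
    IsMaximalClique (myG k) (cliqueSet k c) ∧ (cliqueSet k c).Nontrivial := by
  refine ⟨⟨?_, ?_⟩, ?_⟩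
  · -- clique
    intro x hx y hy hxy
    have hne : x.val ≠ y.val := fun h => hxy (Fin.ext h)
    rw [cliqueSet_mem] at hx hy
    show adjP k x.val y.val
    refine ⟨x.isLt, y.isLt, hne, ?_⟩
    rcases hx with hx | hx <;> rcases hy with hy | hy
    · exact Or.inl ⟨hx.2.1, hy.2.1, by omega⟩
    · exfalso; omega
    · exfalso; omega
    · exact Or.inr (Or.inl ⟨hx.2.1, hy.2.1, by omega⟩)
  · -- maximal
    intro t ht hst
    refine Set.Subset.antisymm hst (fun u hu => ?_)
    by_cases hus : u ∈ cliqueSet k c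
    · exact hus
    exfalso
    rcases Nat.lt_or_ge c (k+2) with hq | hq
    · have he0 : (⟨4*c, by omega⟩ : Fin (7*k+8)) ∈ cliqueSet k c :=
        memQ k c (4*c) (by omega) hq (by omega) (by omega)
      have hne0 : u ≠ ⟨4*c, by omega⟩ := fun h => hus (h ▸ he0)
      have hadj : adjP k u.val (4*c) := ht hu (hst he0) hne0
      rcases hadj.2.2.2 with d | d | d | d | d
      · exact hus (Or.inl ⟨hq, d.1, by omega⟩)
      · omega
      · omega
      · omega
      · omega
    · have hcc : c - (k+2) < k := by omega
      have he0 : (⟨4*k+8+3*(c-(k+2)), by omega⟩ : Fin (7*k+8)) ∈ cliqueSet k c :=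
        memT k c _ (by omega) hq (by omega) (by omega)
      have he1 : (⟨4*k+8+3*(c-(k+2))+1, by omega⟩ : Fin (7*k+8)) ∈ cliqueSet k c :=
        memT k c _ (by omega) hq (by omega) (by omega)
      have he2 : (⟨4*k+8+3*(c-(k+2))+2, by omega⟩ : Fin (7*k+8)) ∈ cliqueSet k c :=
        memT k c _ (by omega) hq (by omega) (by omega)
      have hne0 : u ≠ ⟨4*k+8+3*(c-(k+2)), by omega⟩ := fun h => hus (h ▸ he0)
      have hne1 : u ≠ ⟨4*k+8+3*(c-(k+2))+1, by omega⟩ := fun h => hus (h ▸ he1)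
      have hne2 : u ≠ ⟨4*k+8+3*(c-(k+2))+2, by omega⟩ := fun h => hus (h ▸ he2)
      have hadj0 : adjP k u.val (4*k+8+3*(c-(k+2))) := ht hu (hst he0) hne0
      have hadj1 : adjP k u.val (4*k+8+3*(c-(k+2))+1) := ht hu (hst he1) hne1
      have hadj2 : adjP k u.val (4*k+8+3*(c-(k+2))+2) := ht hu (hst he2) hne2
      rcases Nat.lt_or_ge u.val (4*k+8) with hu4 | hu4
      · obtain ⟨hr0, hl0⟩ := quad_link_of_adj k u.val _ hu4 (by omega) hadj0
        obtain ⟨hr1, hl1⟩ := quad_link_of_adj k u.val _ hu4 (by omega) hadj1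
        obtain ⟨hr2, hl2⟩ := quad_link_of_adj k u.val _ hu4 (by omega) hadj2
        unfold link at hl0 hl1 hl2
        omega
      · have ht0 := tri_cases_of_adj k u.val _ hu4 (by omega) hadj0
        have ht1 := tri_cases_of_adj k u.val _ hu4 (by omega) hadj1
        have ht2 := tri_cases_of_adj k u.val _ hu4 (by omega) hadj2
        have husn : ¬(k+2 ≤ c ∧ 4*k+8 ≤ u.val ∧ (u.val - (4*k+8))/3 + (k+2) = c) :=
          fun hmem => hus (Or.inr hmem)
        omega
  · -- nontrivial
    rcases Nat.lt_or_ge c (k+2) with hq | hq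
    · exact ⟨⟨4*c, by omega⟩, memQ k c (4*c) (by omega) hq (by omega) (by omega),
        ⟨4*c+1, by omega⟩, memQ k c (4*c+1) (by omega) hq (by omega) (by omega),
        Fin.ne_of_val_ne (show 4*c ≠ 4*c+1 by omega)⟩
    · have hcc : c - (k+2) < k := by omega
      exact ⟨⟨4*k+8+3*(c-(k+2)), by omega⟩, memT k c _ (by omega) hq (by omega) (by omega),
        ⟨4*k+8+3*(c-(k+2))+1, by omega⟩, memT k c _ (by omega) hq (by omega) (by omega),
        Fin.ne_of_val_ne (show 4*k+8+3*(c-(k+2)) ≠ 4*k+8+3*(c-(k+2))+1 by omega)⟩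

lemma cliqueSet_disjoint (k : ℕ) {i j : ℕ} (h : i ≠ j) :
    Disjoint (cliqueSet k i) (cliqueSet k j) := by
  rw [Set.disjoint_left]
  intro x hxi hxj
  rw [cliqueSet_mem] at hxi hxj
  omega

end Construction

/-- For every integer `k ≥ 0` there is a 4-chordal graph on exactly `7k+8`
vertices containing `2k+2` pairwise vertex-disjoint maximal non-trivial cliques;
consequently, every clique transversal of this graph has at least `2k+2`
vertices. -/
theorem exists_four_chordal_with_disjoint_max_cliques (k : ℕ) :
    ∃ G : SimpleGraph (Fin (7 * k + 8)),
      KChordal 4 G ∧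
      ∃ cliques : Fin (2 * k + 2) → Set (Fin (7 * k + 8)),
        (∀ i, IsMaximalClique G (cliques i) ∧ (cliques i).Nontrivial) ∧
        (∀ i j, i ≠ j → Disjoint (cliques i) (cliques j)) ∧
        ∀ U : Set (Fin (7 * k + 8)), CliqueTransversal G U → 2 * k + 2 ≤ U.ncard := by
  refine ⟨myG k, ⟨myG_chordal k, edge_in_K4 k⟩, fun i => cliqueSet k i.val,
    fun i => cliqueSet_good k i.val i.isLt, ?_, ?_⟩
  · intro i j hij
    exact cliqueSet_disjoint k (fun h => hij (Fin.ext h))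
  · intro U hU
    have hx : ∀ i : Fin (2*k+2), ∃ x : Fin (7*k+8), x ∈ cliqueSet k i.val ∧ x ∈ U := by
      intro i
      obtain ⟨x, hx1, hx2⟩ := hU _ (cliqueSet_good k i.val i.isLt).1
        (cliqueSet_good k i.val i.isLt).2
      exact ⟨x, hx1, hx2⟩
    choose g hg1 hg2 using hx
    have ginj : Function.Injective g := by
      intro i j hij
      by_contra hne
      exact Set.disjoint_left.mp (cliqueSet_disjoint k (fun h => hne (Fin.ext h)))
        (hg1 i) (hij ▸ hg1 j)
    have hsub : Set.range g ⊆ U := by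
      rintro _ ⟨i, rfl⟩
      exact hg2 i
    have hcard : (Set.range g).ncard = 2*k+2 := by
      rw [← Set.image_univ, Set.ncard_image_of_injective _ ginj, Set.ncard_univ,
        Nat.card_eq_fintype_card, Fintype.card_fin]
    calc 2*k+2 = (Set.range g).ncard := hcard.symm
      _ ≤ U.ncard := Set.ncard_le_ncard hsub (Set.toFinite U)
end

section
/- Let T be a nice tree-decomposition of a 4-chordal graph G, and let u be a node of T corresponding to a maximal clique {v₁, v₂, v₃} of G on exactly three vertices. Then u has three distinct neighbours u₁, u₂, u₃ in T such that the vertex set associated with u₁ contains {v₁, v₂}, the vertex set associated with u₂ contains {v₁, v₃}, and the vertex set associated with u₃ contains {v₂, v₃}. -/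
open SimpleGraph

/-- A *tree-decomposition* of a graph `G` is a tree together with a nonempty
bag of vertices of `G` at each node such that two vertices of `G` are adjacent
iff they are distinct and lie in a common bag, and for each vertex of `G` the
set of nodes whose bag contains it is nonempty and induces a subtree. -/
structure TreeDecomp {V : Type*} (G : SimpleGraph V) (N : Type*) where
  /-- the underlying graph on the nodes -/
  tree : SimpleGraph N
  /-- the underlying graph on the nodes is a tree -/
  isTree : tree.IsTree
  /-- the set of vertices of `G` associated with a node -/
  bag : N → Set V
  bag_nonempty : ∀ u : N, (bag u).Nonempty
  /-- two vertices of `G` are joined by an edge iff they are distinct and some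
  bag contains both of them -/
  adj_iff : ∀ v w : V, G.Adj v w ↔ v ≠ w ∧ ∃ u : N, v ∈ bag u ∧ w ∈ bag u
  /-- every vertex of `G` belongs to at least one bag -/
  mem_bag_nonempty : ∀ v : V, {u : N | v ∈ bag u}.Nonempty
  /-- the nodes whose bag contains a given vertex induce a subtree,
  i.e. a connected subgraph of the tree -/
  subtree : ∀ v : V, (tree.induce {u : N | v ∈ bag u}).Connected

/-- A *nice tree-decomposition* of a 4-chordal graph: a rooted tree-decomposition
(the rooting is given by a parent function that fixes the root, maps each
non-root node to an adjacent node, and whose iteration reaches the root) such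
that (1) adjacent nodes have distinct bags; (2) each bag has at least 3
vertices, and bags with exactly 3 vertices are maximal cliques; (3) a non-root
bag with `k ≥ 5` vertices shares `k-1` vertices with the bag of its parent;
(4) if `G` has a maximal clique on exactly three vertices, then the bag of the
root is such a clique. -/
structure NiceTreeDecomp {V : Type*} (G : SimpleGraph V) (N : Type*)
    extends TreeDecomp G N where
  /-- the root node -/
  root : N
  /-- the parent function of the rooted tree -/
  parent : N → N
  parent_root : parent root = root
  parent_adj : ∀ u : N, u ≠ root → tree.Adj u (parent u)
  parent_reaches_root : ∀ u : N, ∃ n : ℕ, parent^[n] u = root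
  /-- no two adjacent nodes correspond to the same clique -/
  adj_bag_ne : ∀ u w : N, tree.Adj u w → bag u ≠ bag w
  /-- every node corresponds to a clique on at least three vertices -/
  three_le_bag : ∀ u : N, 3 ≤ (bag u).ncard
  /-- a bag with exactly three vertices is a maximal clique -/
  bag_three_maximal : ∀ u : N, (bag u).ncard = 3 → IsMaximalClique G (bag u)
  /-- a non-root bag on `k ≥ 5` vertices shares `k - 1` vertices with the bag
  of the parent -/
  bag_big_inter_parent : ∀ u : N, u ≠ root → 5 ≤ (bag u).ncard →
    (bag u).ncard - 1 ≤ (bag u ∩ bag (parent u)).ncard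
  /-- if `G` contains a maximal clique on exactly three vertices, then the root
  corresponds to such a clique -/
  root_bag_three : (∃ C : Set V, IsMaximalClique G C ∧ C.ncard = 3) →
    IsMaximalClique G (bag root) ∧ (bag root).ncard = 3


section Aux

variable {N : Type*} {tree : SimpleGraph N}

/-- In a tree, the unique path between two vertices of a connected induced
subgraph stays within that subgraph. -/
lemma aux_path_support_subset (hT : tree.IsTree) {S : Set N}
    (hS : (tree.induce S).Connected) {x y : N} (hx : x ∈ S) (hy : y ∈ S)
    (p : tree.Walk x y) (hp : p.IsPath) : ∀ z ∈ p.support, z ∈ S := by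
  classical
  obtain ⟨W⟩ := hS.preconnected ⟨x, hx⟩ ⟨y, hy⟩
  have hmap : (W.map (SimpleGraph.Embedding.induce S).toHom) =
      (W.map (SimpleGraph.Embedding.induce S).toHom) := rfl
  set W' := W.map (SimpleGraph.Embedding.induce S).toHom with hW'
  have hsub : ∀ z ∈ W'.support, z ∈ S := by
    intro z hz
    rw [hW', Walk.support_map, List.mem_map] at hz
    obtain ⟨⟨z', hz'⟩, -, rfl⟩ := hz
    exact hz'
  have hbp : W'.bypass.IsPath := Walk.bypass_isPath W'
  have heq : p = W'.bypass := by
    have h := hT.existsUnique_path x y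
    exact (h.unique hp hbp)
  intro z hz
  rw [heq] at hz
  exact hsub z (Walk.support_bypass_subset W' hz)

/-- In a tree, two neighbours of `u` joined by a walk avoiding `u` are equal. -/
lemma aux_neighbours_eq (hT : tree.IsTree) {u y₁ y₂ : N}
    (h1 : tree.Adj u y₁) (h2 : tree.Adj u y₂) (W : tree.Walk y₁ y₂)
    (hW : u ∉ W.support) : y₁ = y₂ := by
  classical
  have hP : W.bypass.IsPath := Walk.bypass_isPath W
  have huP : u ∉ W.bypass.support := fun h => hW (Walk.support_bypass_subset W h)
  have hpath1 : (Walk.cons h1 W.bypass).IsPath := hP.cons huP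
  have hpath2 : (Walk.cons h2 (Walk.nil)).IsPath := by
    simp [Walk.cons_isPath_iff, h2.ne]
  have := (hT.existsUnique_path u y₂).unique hpath1 hpath2
  have hlen : (Walk.cons h1 W.bypass).length = (Walk.cons h2 (Walk.nil : tree.Walk y₂ y₂)).length := by
    rw [this]
  simp [Walk.length_cons] at hlen
  exact hlen.eq

end Aux

/-- Key step: a neighbour of `u` whose bag contains two given adjacent vertices
of the (small) bag of `u`. -/
lemma aux_key {V N : Type*} [Fintype V] {G : SimpleGraph V} (hG : KChordal 4 G)
    (T : NiceTreeDecomp G N) (u : N) (a b : V) (hab : G.Adj a b)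
    (ha : a ∈ T.bag u) (hb : b ∈ T.bag u) (hcard : (T.bag u).ncard ≤ 3) :
    ∃ y, T.tree.Adj u y ∧ a ∈ T.bag y ∧ b ∈ T.bag y := by
  classical
  obtain ⟨s, hs, hs4, has, hbs⟩ := hG.2 a b hab
  have hns : ¬ s ⊆ T.bag u := by
    intro h
    have := Set.ncard_le_ncard h (Set.toFinite _)
    omega
  obtain ⟨w, hws, hwu⟩ := Set.not_subset.mp hns
  have hwa : G.Adj a w := hs has hws (by rintro rfl; exact hwu ha)
  have hwb : G.Adj b w := hs hbs hws (by rintro rfl; exact hwu hb)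
  obtain ⟨-, xa, hxa_a, hxa_w⟩ := (T.adj_iff a w).mp hwa
  obtain ⟨-, xb, hxb_b, hxb_w⟩ := (T.adj_iff b w).mp hwb
  have hT := T.isTree
  -- unique paths
  have hux_a : u ≠ xa := by rintro rfl; exact hwu hxa_w
  have hux_b : u ≠ xb := by rintro rfl; exact hwu hxb_w
  obtain ⟨q, hq, -⟩ := hT.existsUnique_path u xa
  obtain ⟨r, hr, -⟩ := hT.existsUnique_path u xb
  obtain ⟨p, hp, -⟩ := hT.existsUnique_path xa xb
  have hqa : ∀ z ∈ q.support, a ∈ T.bag z :=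
    aux_path_support_subset hT (T.subtree a) ha hxa_a q hq
  have hrb : ∀ z ∈ r.support, b ∈ T.bag z :=
    aux_path_support_subset hT (T.subtree b) hb hxb_b r hr
  have hpw : ∀ z ∈ p.support, w ∈ T.bag z :=
    aux_path_support_subset hT (T.subtree w) hxa_w hxb_w p hp
  have hup : u ∉ p.support := fun h => hwu (hpw u h)
  -- decompose q and r
  cases q with
  | nil => exact absurd rfl hux_a
  | cons h1 q' =>
    cases r with
    | nil => exact absurd rfl hux_b
    | cons h2 r' =>
      rename_i y₁ y₂
      rw [Walk.cons_isPath_iff] at hq hr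
      have huq' : u ∉ q'.support := hq.2
      have hur' : u ∉ r'.support := hr.2
      -- walk from y₁ to y₂ avoiding u
      have hW : u ∉ (q'.append (p.append r'.reverse)).support := by
        rw [Walk.mem_support_append_iff, Walk.mem_support_append_iff,
          Walk.support_reverse, List.mem_reverse]
        push_neg
        exact ⟨huq', hup, hur'⟩
      have hy := aux_neighbours_eq hT h1 h2 (q'.append (p.append r'.reverse)) hW
      subst hy
      refine ⟨y₁, h1, ?_, ?_⟩
      · exact hqa y₁ (by simp)
      · exact hrb y₁ (by simp)

/-- Let `T` be a nice tree-decomposition of a 4-chordal graph `G` and let `u`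
be a node of `T` corresponding to a maximal clique `{v₁, v₂, v₃}` of `G` on
exactly three vertices. Then `u` has three distinct neighbours `u₁`, `u₂`, `u₃`
whose bags contain `{v₁, v₂}`, `{v₁, v₃}` and `{v₂, v₃}`, respectively. -/
theorem nice_treeDecomp_triangle_neighbours {V : Type*} {N : Type*} [Fintype V]
    (G : SimpleGraph V) (hG : KChordal 4 G) (T : NiceTreeDecomp G N) (u : N)
    (v₁ v₂ v₃ : V) (h12 : v₁ ≠ v₂) (h13 : v₁ ≠ v₃) (h23 : v₂ ≠ v₃)
    (hbag : T.bag u = {v₁, v₂, v₃}) (hmax : IsMaximalClique G (T.bag u)) :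
    ∃ u₁ u₂ u₃ : N, u₁ ≠ u₂ ∧ u₁ ≠ u₃ ∧ u₂ ≠ u₃ ∧
      T.tree.Adj u u₁ ∧ T.tree.Adj u u₂ ∧ T.tree.Adj u u₃ ∧
      {v₁, v₂} ⊆ T.bag u₁ ∧ {v₁, v₃} ⊆ T.bag u₂ ∧ {v₂, v₃} ⊆ T.bag u₃ := by
  haveI := Classical.decEq N
  have hcard : (T.bag u).ncard = 3 := by
    rw [hbag]
    exact Set.ncard_eq_three.mpr ⟨v₁, v₂, v₃, h12, h13, h23, rfl⟩
  have hv1 : v₁ ∈ T.bag u := by rw [hbag]; simp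
  have hv2 : v₂ ∈ T.bag u := by rw [hbag]; simp
  have hv3 : v₃ ∈ T.bag u := by rw [hbag]; simp
  have adj12 : G.Adj v₁ v₂ := (T.adj_iff v₁ v₂).mpr ⟨h12, u, hv1, hv2⟩
  have adj13 : G.Adj v₁ v₃ := (T.adj_iff v₁ v₃).mpr ⟨h13, u, hv1, hv3⟩
  have adj23 : G.Adj v₂ v₃ := (T.adj_iff v₂ v₃).mpr ⟨h23, u, hv2, hv3⟩
  obtain ⟨u₁, hadj1, h1a, h1b⟩ := aux_key hG T u v₁ v₂ adj12 hv1 hv2 hcard.le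
  obtain ⟨u₂, hadj2, h2a, h2b⟩ := aux_key hG T u v₁ v₃ adj13 hv1 hv3 hcard.le
  obtain ⟨u₃, hadj3, h3a, h3b⟩ := aux_key hG T u v₂ v₃ adj23 hv2 hv3 hcard.le
  have bag_clique : ∀ x : N, G.IsClique (T.bag x) := by
    intro x p hp q hq hpq
    exact (T.adj_iff p q).mpr ⟨hpq, x, hp, hq⟩
  have cover : ∀ x : N, T.tree.Adj u x → v₁ ∈ T.bag x → v₂ ∈ T.bag x →
      v₃ ∈ T.bag x → False := by
    intro x hadj ha hb hc
    apply T.adj_bag_ne u x hadj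
    apply hmax.2 _ (bag_clique x)
    rw [hbag]
    intro z hz
    simp only [Set.mem_insert_iff, Set.mem_singleton_iff] at hz
    rcases hz with rfl | rfl | rfl <;> assumption
  refine ⟨u₁, u₂, u₃, ?_, ?_, ?_, hadj1, hadj2, hadj3, ?_, ?_, ?_⟩
  · rintro rfl; exact cover u₁ hadj1 h1a h1b h2b
  · rintro rfl; exact cover u₁ hadj1 h1a h1b h3b
  · rintro rfl; exact cover u₂ hadj2 h2a h3a h2b
  · intro z hz
    simp only [Set.mem_insert_iff, Set.mem_singleton_iff] at hz
    rcases hz with rfl | rfl <;> assumption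
  · intro z hz
    simp only [Set.mem_insert_iff, Set.mem_singleton_iff] at hz
    rcases hz with rfl | rfl <;> assumption
  · intro z hz
    simp only [Set.mem_insert_iff, Set.mem_singleton_iff] at hz
    rcases hz with rfl | rfl <;> assumption
end
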